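/- Let n ≥ 1, u ∈ ℝ^n with u_i > 0 for all i and ∑_{i=1}^n u_i < 1, and set u_0 = 1 − ∑_{i=1}^n u_i. Let q_{ij} ≥ r_{ij} ≥ 0 and define q_i(u), r_i(u), A(u) as in the multiphase model (A(u)_{ij} = (q_i(u) − r_i(u)) δ_{ij} + u_i (q_{ij} − q_j(u) + r_{ij} + r_j(u) − ∑_ℓ u_ℓ (q_{ℓj}+r_{ℓj})) with q_i(u)=∑_j q_{ij}u_j, r_i(u)=∑_j r_{ij}u_j). Let H(u)_{ij} = δ_{ij}/u_i + 1/u_0. Then the matrix product satisfies (H(u)A(u))_{ij} = (δ_{ij}/u_i)(q_i(u) − r_i(u)) + q_{ij} + r_{ij} for all i, j = 1,…,n. -/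

import Mathlib

open Finset

/-- Solvent volume fraction `u₀ = 1 - ∑ uᵢ`. -/
noncomputable def solvent (n : ℕ) (u : Fin n → ℝ) : ℝ := 1 - ∑ i, u i

/-- Linear pressure `qᵢ(u) = ∑ⱼ q_{ij} uⱼ`. -/
noncomputable def press (n : ℕ) (q : Fin n → Fin n → ℝ) (u : Fin n → ℝ) (i : Fin n) : ℝ :=
  ∑ j, q i j * u j

/-- Hessian of the Boltzmann entropy: `H(u)_{ij} = δ_{ij}/uᵢ + 1/u₀`. -/
noncomputable def hessB (n : ℕ) (u : Fin n → ℝ) (i j : Fin n) : ℝ :=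
  (if i = j then 1 / u i else 0) + 1 / solvent n u

/-- Diffusion matrix of the multiphase cross-diffusion system. -/
noncomputable def diffA (n : ℕ) (q r : Fin n → Fin n → ℝ) (u : Fin n → ℝ) (i j : Fin n) : ℝ :=
  (press n q u i - press n r u i) * (if i = j then 1 else 0) +
    u i * (q i j - press n q u j + r i j + press n r u j -
      ∑ l, u l * (q l j + r l j))

theorem stmt_1 (n : ℕ) (hn : 1 ≤ n) (q r : Fin n → Fin n → ℝ)
    (hr : ∀ i j, 0 ≤ r i j) (hqr : ∀ i j, r i j ≤ q i j)
    (u : Fin n → ℝ) (hu : ∀ i, 0 < u i) (hsum : ∑ i, u i < 1) :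
    ∀ i j : Fin n,
      (∑ k, hessB n u i k * diffA n q r u k j) =
        (if i = j then (press n q u i - press n r u i) / u i else 0) + q i j + r i j := by
  intro i j
  have hu0 : solvent n u ≠ 0 := by
    have : 0 < solvent n u := by simp only [solvent]; linarith
    exact this.ne'
  have hui : (u i) ≠ 0 := (hu i).ne'
  set C : ℝ := press n q u j - press n r u j + ∑ l, u l * (q l j + r l j) with hC
  have hsA : ∑ k, diffA n q r u k j = solvent n u * C := by
    simp only [diffA]
    rw [Finset.sum_add_distrib]
    have h1 : ∑ k, (press n q u k - press n r u k) * (if k = j then 1 else 0)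
        = press n q u j - press n r u j := by
      simp [mul_ite]
    have h2 : ∑ k, u k * (q k j - press n q u j + r k j + press n r u j -
        ∑ l, u l * (q l j + r l j))
        = (∑ k, u k * (q k j + r k j)) - (∑ k, u k) * C := by
      rw [Finset.sum_mul, ← Finset.sum_sub_distrib]
      apply Finset.sum_congr rfl
      intro k _
      rw [hC]; ring
    rw [h1, h2, hC]
    simp only [solvent]
    ring
  have hH : ∀ k, hessB n u i k = (if i = k then 1 / u i else 0) + 1 / solvent n u := by
    intro k; rfl
  calc (∑ k, hessB n u i k * diffA n q r u k j)
      = ∑ k, ((if i = k then 1 / u i else 0) * diffA n q r u k j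
          + (1 / solvent n u) * diffA n q r u k j) := by
        apply Finset.sum_congr rfl; intro k _; rw [hH k]; ring
    _ = (1 / u i) * diffA n q r u i j + (1 / solvent n u) * ∑ k, diffA n q r u k j := by
        rw [Finset.sum_add_distrib, ← Finset.mul_sum]
        congr 1
        simp [ite_mul]
    _ = (1 / u i) * diffA n q r u i j + C := by
        rw [hsA]; field_simp
    _ = (if i = j then (press n q u i - press n r u i) / u i else 0) + q i j + r i j := by
        simp only [diffA, hC]
        by_cases h : i = j
        · subst h; simp only [if_pos rfl, ↓reduceIte]; field_simp; ring
        · simp only [if_neg h]; field_simp; ring
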